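/- Let C = C₁ ⊔ C₂ and let B be a conjunction of literals with domain exactly C₁ and target values b : C₁ → {0,1}. Suppose W suffices to adjust for confounding of C on D. If for some assignment c₂ to C₂ and some value w (all conditioning events below having positive probability) one has 0 < E[D | C agrees with b on C₁, C = c₂ on C₂, W = w] − Σ_{i ∈ C₁} E[D | C agrees with b on C₁ \ {i}, C(i) = 1 − b(i), C = c₂ on C₂, W = w], then B is irreducible for D(C,Ω). -/

import Mathlib

/-- An assignment of values to the binary causes indexed by `ι`. -/
abbrev Assign (ι : Type*) := ι → Bool

/-- A conjunction of literals over `ι`: a partial assignment, where `B i = some v`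
means the literal at coordinate `i` has target value `v`, and `B i = none` means
`i` is not in the domain of the conjunction. -/
abbrev Conj (ι : Type*) := ι → Option Bool

/-- An assignment `c` satisfies a conjunction of literals `B`. -/
def Satisfies {ι : Type*} (c : Assign ι) (B : Conj ι) : Prop :=
  ∀ i v, B i = some v → c i = v

/-- `B'` extends `B` : the domain of `B'` contains that of `B` and they agree there. -/
def ConjExtends {ι : Type*} (B B' : Conj ι) : Prop :=
  ∀ i v, B i = some v → B' i = some v

/-- `(A, 𝔅)` is a sufficient cause representation for the family of potential
outcomes `D`. -/
def IsRepresentation {ι Ω : Type*} (D : Ω → Assign ι → Bool)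
    {p : ℕ} (A : Fin p → Ω → Bool) (𝔅 : Fin p → Conj ι) : Prop :=
  ∀ (ω : Ω) (c : Assign ι),
    D ω c = true ↔ ∃ j, A j ω = true ∧ Satisfies c (𝔅 j)

/-- `B` is irreducible for `D(C, Ω)`: every sufficient cause representation
contains some conjunction extending `B`. -/
def IrreducibleConj {ι Ω : Type*} (D : Ω → Assign ι → Bool) (B : Conj ι) : Prop :=
  ∀ (p : ℕ) (A : Fin p → Ω → Bool) (𝔅 : Fin p → Conj ι),
    IsRepresentation D A 𝔅 → ∃ j, ConjExtends B (𝔅 j)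

/-- `B` is a sufficient cause for `D` for the individual `ω`. -/
def SuffCauseFor {ι Ω : Type*} (D : Ω → Assign ι → Bool) (B : Conj ι) (ω : Ω) : Prop :=
  ∀ c : Assign ι, Satisfies c B → D ω c = true

/-- `B` is a minimal sufficient cause for `D` for `ω`: it is a sufficient cause,
but no restriction of `B` to a proper subset of its domain is. -/
def MinSuffCauseFor {ι Ω : Type*} (D : Ω → Assign ι → Bool) (B : Conj ι) (ω : Ω) : Prop :=
  SuffCauseFor D B ω ∧
    ∀ B' : Conj ι, ConjExtends B' B → B' ≠ B → ¬ SuffCauseFor D B' ω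

/-- `B` is a singular (minimal sufficient) cause for `ω`: it is the unique minimal
sufficient cause for `ω`. -/
def SingularFor {ι Ω : Type*} (D : Ω → Assign ι → Bool) (B : Conj ι) (ω : Ω) : Prop :=
  MinSuffCauseFor D B ω ∧ ∀ B' : Conj ι, B' ≠ B → ¬ MinSuffCauseFor D B' ω

/-- `B` is singular for `D(C, Ω)`: it is singular for some individual. -/
def Singular {ι Ω : Type*} (D : Ω → Assign ι → Bool) (B : Conj ι) : Prop :=
  ∃ ω : Ω, SingularFor D B ω

/-- The literal at coordinate `i` with target value `v` has a positive monotonic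
effect on `D` relative to `C`. -/
def PosMonotone {ι Ω : Type*} [DecidableEq ι] (D : Ω → Assign ι → Bool)
    (i : ι) (v : Bool) : Prop :=
  ∀ (ω : Ω) (c : Assign ι),
    D ω (Function.update c i (!v)) = true → D ω (Function.update c i v) = true

/-- `T` is a tree on the finite vertex set `V`: a set of unordered pairs of
distinct elements of `V` with `|T| = |V| - 1` such that any two vertices of `V`
are connected by a path of edges of `T`. -/
def IsTreeOn {ι : Type*} (V : Finset ι) (T : Finset (Sym2 ι)) : Prop :=
  (∀ e ∈ T, ¬ e.IsDiag ∧ ∀ i ∈ e, i ∈ V) ∧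
  T.card = V.card - 1 ∧
  (∀ x ∈ V, ∀ y ∈ V, Relation.ReflTransGen (fun a b => s(a, b) ∈ T) x y)


open MeasureTheory ProbabilityTheory

/-- Deterministic part: a witness individual gives irreducibility. -/
lemma irr_of_witness {ι Ω : Type*} [DecidableEq ι] (D : Ω → Assign ι → Bool)
    (C₁ : Finset ι) (b c₂ : ι → Bool) (ω : Ω)
    (h1 : D ω (fun i => if i ∈ C₁ then b i else c₂ i) = true)
    (h2 : ∀ i ∈ C₁,
      D ω (fun j => if j = i then !(b j) else if j ∈ C₁ then b j else c₂ j) ≠ true) :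
    IrreducibleConj D (fun i => if i ∈ C₁ then some (b i) else none) := by
  intro p A 𝔅 hrep
  obtain ⟨j, hAj, hsat⟩ := (hrep ω _).mp h1
  refine ⟨j, fun i v hiv => ?_⟩
  by_cases hi : i ∈ C₁
  · simp only [hi, if_true, Option.some.injEq] at hiv
    subst hiv
    by_contra hne
    have hBnone : 𝔅 j i = none := by
      cases h𝔅 : 𝔅 j i with
      | none => rfl
      | some v' =>
        have hv' := hsat i v' h𝔅
        simp only [hi, if_true] at hv'
        rw [← hv'] at h𝔅
        exact (hne h𝔅).elim
    have hsat' : Satisfies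
        (fun j' => if j' = i then !(b j') else if j' ∈ C₁ then b j' else c₂ j') (𝔅 j) := by
      intro k v' hk
      by_cases hki : k = i
      · subst hki; rw [hBnone] at hk; exact absurd hk (by simp)
      · simp only [hki, if_false]; exact hsat k v' hk
    exact h2 i hi ((hrep ω _).mpr ⟨j, hAj, hsat'⟩)
  · simp [hi] at hiv

/-- Key conditional probability identity via no-confounding. -/
lemma cond_eq_aux {ι Ω 𝕎 : Type*} [Fintype ι]
    [MeasurableSpace Ω] [MeasurableSpace 𝕎] [MeasurableSingletonClass 𝕎]
    (P : Measure Ω) [IsProbabilityMeasure P]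
    (D : Ω → Assign ι → Bool) (Cobs : Ω → Assign ι) (W : Ω → 𝕎)
    (hD : ∀ c, Measurable fun ω => D ω c) (hC : Measurable Cobs) (hW : Measurable W)
    (c : Assign ι) (w : 𝕎)
    (hE : P {ω | Cobs ω = c ∧ W ω = w} ≠ 0)
    (hindep : IndepFun (fun ω => D ω c) Cobs (ProbabilityTheory.cond P {ω | W ω = w})) :
    (ProbabilityTheory.cond P {ω | Cobs ω = c ∧ W ω = w}) {ω | D ω (Cobs ω) = true}
      = (ProbabilityTheory.cond P {ω | W ω = w}) {ω | D ω c = true} := by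
  have hmW : MeasurableSet {ω | W ω = w} := hW (measurableSet_singleton w)
  have hmC : MeasurableSet {ω | Cobs ω = c} := hC (measurableSet_singleton c)
  have hmE : MeasurableSet {ω | Cobs ω = c ∧ W ω = w} := by
    have : {ω | Cobs ω = c ∧ W ω = w} = {ω | Cobs ω = c} ∩ {ω | W ω = w} := rfl
    rw [this]; exact hmC.inter hmW
  have hW0 : P {ω | W ω = w} ≠ 0 := fun h0 => hE (le_antisymm
    (le_trans (measure_mono (fun ω hω => hω.2)) h0.le) zero_le)
  -- independence applied to {true} and {c}
  have hindep' := hindep.measure_inter_preimage_eq_mul {true} {c}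
    (measurableSet_singleton true) (measurableSet_singleton c)
  have hpre1 : (fun ω => D ω c) ⁻¹' {true} = {ω | D ω c = true} := rfl
  have hpre2 : Cobs ⁻¹' {c} = {ω | Cobs ω = c} := rfl
  rw [hpre1, hpre2] at hindep'
  set μ := ProbabilityTheory.cond P {ω | W ω = w} with hμ
  -- express everything via P
  have hμ_app : ∀ t : Set Ω, μ t = (P {ω | W ω = w})⁻¹ * P ({ω | W ω = w} ∩ t) :=
    fun t => ProbabilityTheory.cond_apply hmW P t
  have hEint : {ω | Cobs ω = c ∧ W ω = w} ∩ {ω | D ω (Cobs ω) = true}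
      = {ω | W ω = w} ∩ ({ω | D ω c = true} ∩ {ω | Cobs ω = c}) := by
    ext ω
    simp only [Set.mem_inter_iff, Set.mem_setOf_eq]
    constructor
    · rintro ⟨⟨hc, hw⟩, hd⟩; rw [hc] at hd; exact ⟨hw, hd, hc⟩
    · rintro ⟨hw, hd, hc⟩; exact ⟨⟨hc, hw⟩, by rw [hc]; exact hd⟩
  have hC0 : μ {ω | Cobs ω = c} ≠ 0 := by
    intro h0
    have h2 : (P {ω | W ω = w})⁻¹ * P ({ω | W ω = w} ∩ {ω | Cobs ω = c}) = 0 :=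
      (hμ_app {ω | Cobs ω = c}).symm.trans h0
    have h1 : P ({ω | W ω = w} ∩ {ω | Cobs ω = c}) = 0 := by
      rcases mul_eq_zero.mp h2 with h | h
      · exact absurd h (ENNReal.inv_ne_zero.mpr (measure_ne_top P _))
      · exact h
    have hsub : {ω | Cobs ω = c ∧ W ω = w} ⊆ {ω | W ω = w} ∩ {ω | Cobs ω = c} :=
      fun ω hω => ⟨hω.2, hω.1⟩
    exact hE (le_antisymm (le_trans (measure_mono hsub) h1.le) zero_le)
  have hC0' : μ {ω | Cobs ω = c} ≠ ⊤ := by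
    have : IsProbabilityMeasure μ := cond_isProbabilityMeasure hW0
    exact measure_ne_top μ _
  have hEeq : P {ω | Cobs ω = c ∧ W ω = w}
      = P {ω | W ω = w} * μ {ω | Cobs ω = c} := by
    rw [hμ_app, ← mul_assoc, ENNReal.mul_inv_cancel hW0 (measure_ne_top P _), one_mul]
    congr 1; ext ω; simp only [Set.mem_setOf_eq, Set.mem_inter_iff]; tauto
  have key : ∀ a x y : ENNReal, a ≠ 0 → a ≠ ⊤ → x ≠ 0 → x ≠ ⊤ →
      (a * x)⁻¹ * (a * (y * x)) = y := by
    intro a x y ha ha' hx hx'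
    rw [ENNReal.mul_inv (Or.inl ha) (Or.inl ha')]
    calc a⁻¹ * x⁻¹ * (a * (y * x)) = (a⁻¹ * a) * ((x⁻¹ * x) * y) := by ring
    _ = y := by rw [ENNReal.inv_mul_cancel ha ha', ENNReal.inv_mul_cancel hx hx',
          one_mul, one_mul]
  have h3 : P ({ω | W ω = w} ∩ ({ω | D ω c = true} ∩ {ω | Cobs ω = c}))
      = P {ω | W ω = w} * (μ {ω | D ω c = true} * μ {ω | Cobs ω = c}) := by
    rw [← hindep', hμ_app, ← mul_assoc, ENNReal.mul_inv_cancel hW0 (measure_ne_top P _),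
      one_mul]
  rw [ProbabilityTheory.cond_apply hmE P, hEint, h3, hEeq]
  exact key _ _ _ hW0 (measure_ne_top P _) hC0 hC0'


/-- Theorem 4.2: empirical condition (no monotonicity) sufficient
for irreducibility of `B` (domain `C₁`, targets `b`). -/
theorem irreducible_of_empirical_condition {ι Ω 𝕎 : Type*} [Fintype ι] [DecidableEq ι]
    [Nonempty ι] [Nonempty Ω]
    [MeasurableSpace Ω] [MeasurableSpace 𝕎] [MeasurableSingletonClass 𝕎] [Countable 𝕎]
    (P : Measure Ω) [IsProbabilityMeasure P]
    (D : Ω → Assign ι → Bool) (Cobs : Ω → Assign ι) (W : Ω → 𝕎)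
    (hD : ∀ c : Assign ι, Measurable fun ω => D ω c)
    (hC : Measurable Cobs) (hW : Measurable W)
    (hconf : ∀ (c : Assign ι) (w : 𝕎), P {ω | W ω = w} ≠ 0 →
      IndepFun (fun ω => D ω c) Cobs (ProbabilityTheory.cond P {ω | W ω = w}))
    (C₁ C₂ : Finset ι) (hdisj : Disjoint C₁ C₂) (hunion : C₁ ∪ C₂ = Finset.univ)
    (b : ι → Bool) (c₂ : ι → Bool) (w : 𝕎)
    (hpos1 : P {ω | Cobs ω = (fun i => if i ∈ C₁ then b i else c₂ i) ∧ W ω = w} ≠ 0)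
    (hpos2 : ∀ i ∈ C₁,
      P {ω | Cobs ω = (fun j => if j = i then !(b j) else if j ∈ C₁ then b j else c₂ j)
              ∧ W ω = w} ≠ 0)
    (hineq : 0 <
      ((ProbabilityTheory.cond P
          {ω | Cobs ω = (fun i => if i ∈ C₁ then b i else c₂ i) ∧ W ω = w})
        {ω | D ω (Cobs ω) = true}).toReal
      - ∑ i ∈ C₁,
          ((ProbabilityTheory.cond P
              {ω | Cobs ω = (fun j => if j = i then !(b j) else if j ∈ C₁ then b j else c₂ j)
                    ∧ W ω = w})
            {ω | D ω (Cobs ω) = true}).toReal) :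
    IrreducibleConj D (fun i => if i ∈ C₁ then some (b i) else none) := by
  
  classical
  have hW0 : P {ω | W ω = w} ≠ 0 := fun h0 => hpos1 (le_antisymm
    (le_trans (measure_mono fun ω hω => hω.2) h0.le) zero_le)
  set μ := ProbabilityTheory.cond P {ω | W ω = w} with hμ
  have hprob : IsProbabilityMeasure μ := cond_isProbabilityMeasure hW0
  set c₀ : Assign ι := fun i => if i ∈ C₁ then b i else c₂ i with hc₀
  set cf : ι → Assign ι :=
    fun i j => if j = i then !(b j) else if j ∈ C₁ then b j else c₂ j with hcf
  have heq1 := cond_eq_aux P D Cobs W hD hC hW c₀ w hpos1 (hconf c₀ w hW0)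
  have heq2 : ∀ i ∈ C₁,
      ((ProbabilityTheory.cond P {ω | Cobs ω = cf i ∧ W ω = w})
        {ω | D ω (Cobs ω) = true}).toReal = (μ {ω | D ω (cf i) = true}).toReal :=
    fun i hi => congrArg ENNReal.toReal
      (cond_eq_aux P D Cobs W hD hC hW (cf i) w (hpos2 i hi) (hconf (cf i) w hW0))
  rw [heq1, Finset.sum_congr rfl heq2] at hineq
  -- probabilistic step
  set A₀ : Set Ω := {ω | D ω c₀ = true} with hA₀
  set A : ι → Set Ω := fun i => {ω | D ω (cf i) = true} with hA
  set U : Set Ω := ⋃ i ∈ C₁, A i with hU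
  have hS : μ (A₀ ∩ Uᶜ) ≠ 0 := by
    intro h0
    have hsub : A₀ ⊆ (A₀ ∩ Uᶜ) ∪ U := by
      intro ω hω
      by_cases hωU : ω ∈ U
      · exact Or.inr hωU
      · exact Or.inl ⟨hω, hωU⟩
    have h1 : μ A₀ ≤ ∑ i ∈ C₁, μ (A i) := by
      calc μ A₀ ≤ μ ((A₀ ∩ Uᶜ) ∪ U) := measure_mono hsub
        _ ≤ μ (A₀ ∩ Uᶜ) + μ U := measure_union_le _ _
        _ = μ U := by rw [h0, zero_add]
        _ ≤ ∑ i ∈ C₁, μ (A i) := measure_biUnion_finset_le _ _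
    have h2 : (μ A₀).toReal ≤ ∑ i ∈ C₁, (μ (A i)).toReal := by
      have hfin : ∀ i ∈ C₁, μ (A i) ≠ ⊤ := fun i _ => measure_ne_top μ _
      calc (μ A₀).toReal ≤ (∑ i ∈ C₁, μ (A i)).toReal :=
            ENNReal.toReal_mono (ENNReal.sum_ne_top.mpr hfin) h1
        _ = ∑ i ∈ C₁, (μ (A i)).toReal := ENNReal.toReal_sum hfin
    linarith
  obtain ⟨ω, hω1, hω2⟩ := nonempty_of_measure_ne_zero hS
  refine irr_of_witness D C₁ b c₂ ω hω1 (fun i hi hDi => hω2 ?_)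
  exact Set.mem_biUnion hi hDi
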